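/- Let Z ~ N(μ_z, σ_z²) and Y ~ N(0, σ_y²) be independent, σ_z, σ_y > 0. In the Kyle equilibrium, the noise trader's expected loss E[Y·(Z − P(X(Z)+Y))] equals −σ_y σ_z/2; in particular, the insider's expected gain σ_y σ_z/2 is exactly the noise trader's expected loss. -/

import Mathlib

open MeasureTheory ProbabilityTheory

open MeasureTheory ProbabilityTheory Real Filter Set Asymptotics
open scoped NNReal ENNReal

namespace KyleAux

lemma integrable_sq_exp {b : ℝ} (hb : 0 < b) :
    Integrable fun x : ℝ => x ^ 2 * Real.exp (-b * x ^ 2) := by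
  have h := integrable_rpow_mul_exp_neg_mul_sq hb (s := 2) (by norm_num)
  simpa [Real.rpow_two] using h

lemma integral_id_exp {b : ℝ} (hb : 0 < b) :
    ∫ x : ℝ, x * Real.exp (-b * x ^ 2) = 0 := by
  have h := integral_neg_eq_self (fun x : ℝ => x * Real.exp (-b * x ^ 2)) (volume : Measure ℝ)
  simp only [neg_sq] at h
  rw [show (fun x : ℝ => -x * Real.exp (-b * x ^ 2))
      = fun x : ℝ => -(x * Real.exp (-b * x ^ 2)) from funext fun x => by ring,
    integral_neg] at h
  linarith

lemma tendsto_mul_exp {b : ℝ} (hb : 0 < b) :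
    Tendsto (fun x : ℝ => x * Real.exp (-b * x ^ 2)) atTop (nhds 0) := by
  have h := rpow_mul_exp_neg_mul_sq_isLittleO_exp_neg hb 1
  have hg : Tendsto (fun x : ℝ => Real.exp (-(1/2) * x)) atTop (nhds 0) := by
    apply Real.tendsto_exp_atBot.comp
    exact Tendsto.const_mul_atTop_of_neg (by norm_num) tendsto_id
  have := h.tendsto_zero_of_tendsto hg
  simpa [Real.rpow_one] using this

lemma integral_sq_exp {b : ℝ} (hb : 0 < b) :
    ∫ x : ℝ, x ^ 2 * Real.exp (-b * x ^ 2) = Real.sqrt (π / b) / (2 * b) := by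
  have hderiv : ∀ x ∈ Ici (0:ℝ), HasDerivAt (fun x : ℝ => x * Real.exp (-b * x ^ 2))
      (Real.exp (-b * x ^ 2) - 2 * b * (x ^ 2 * Real.exp (-b * x ^ 2))) x := by
    intro x _
    have h1 : HasDerivAt (fun x : ℝ => -b * x ^ 2) (-b * (2 * x)) x := by
      simpa using (hasDerivAt_pow 2 x).const_mul (-b)
    have h2 := (hasDerivAt_id x).fun_mul h1.exp
    refine h2.congr_deriv ?_
    simp only [id_eq]
    ring
  have hint : IntegrableOn (fun x : ℝ =>
      Real.exp (-b * x ^ 2) - 2 * b * (x ^ 2 * Real.exp (-b * x ^ 2))) (Ioi (0:ℝ)) :=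
    ((integrable_exp_neg_mul_sq hb).sub ((integrable_sq_exp hb).const_mul (2*b))).integrableOn
  have hIoi := integral_Ioi_of_hasDerivAt_of_tendsto' hderiv hint (tendsto_mul_exp hb)
  simp only [zero_mul, sub_zero] at hIoi
  have hsplit : ∫ x in Ioi (0:ℝ), (Real.exp (-b * x ^ 2) - 2 * b * (x ^ 2 * Real.exp (-b * x ^ 2)))
      = (∫ x in Ioi (0:ℝ), Real.exp (-b * x ^ 2))
        - 2 * b * ∫ x in Ioi (0:ℝ), x ^ 2 * Real.exp (-b * x ^ 2) := by
    rw [integral_sub ((integrable_exp_neg_mul_sq hb).integrableOn)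
      (((integrable_sq_exp hb).const_mul (2*b)).integrableOn), integral_const_mul]
  have hIoi2 : ∫ x in Ioi (0:ℝ), x ^ 2 * Real.exp (-b * x ^ 2) = Real.sqrt (π / b) / (4 * b) := by
    rw [hsplit, integral_gaussian_Ioi] at hIoi
    have hb' : (2 * b) ≠ 0 := by positivity
    field_simp at hIoi ⊢
    linarith
  have heven : ∫ x in Iic (0:ℝ), x ^ 2 * Real.exp (-b * x ^ 2)
      = ∫ x in Ioi (0:ℝ), x ^ 2 * Real.exp (-b * x ^ 2) := by
    rw [← neg_zero, ← integral_comp_neg_Ioi]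
    simp
  rw [← integral_add_compl (measurableSet_Ioi (a := (0:ℝ))) (integrable_sq_exp hb), compl_Ioi,
    heven, hIoi2]
  field_simp
  ring


lemma pdf_eq {v : ℝ≥0} (x : ℝ) :
    gaussianPDFReal 0 v x
      = (Real.sqrt (2 * π * v))⁻¹ * Real.exp (-(2 * (v:ℝ))⁻¹ * x ^ 2) := by
  rw [gaussianPDFReal]
  congr 1
  rw [sub_zero]
  ring

lemma coe_v_pos {v : ℝ≥0} (hv : v ≠ 0) : 0 < (v : ℝ) := by
  exact_mod_cast hv.bot_lt

lemma b_pos {v : ℝ≥0} (hv : v ≠ 0) : 0 < (2 * (v:ℝ))⁻¹ := by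
  have := coe_v_pos hv
  positivity

lemma gaussianReal_integral_eq {v : ℝ≥0} (hv : v ≠ 0) (g : ℝ → ℝ) :
    ∫ x, g x ∂(gaussianReal 0 v) = ∫ x, gaussianPDFReal 0 v x * g x := by
  rw [gaussianReal_of_var_ne_zero _ hv]
  have hd : (gaussianPDF 0 v)
      = fun x => ((Real.toNNReal (gaussianPDFReal 0 v x) : ℝ≥0) : ℝ≥0∞) := rfl
  rw [hd, integral_withDensity_eq_integral_smul
    ((measurable_gaussianPDFReal 0 v).real_toNNReal) g]
  congr 1
  funext x
  simp [NNReal.smul_def, Real.coe_toNNReal _ (gaussianPDFReal_nonneg 0 v x)]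

lemma gaussianReal_integrable {v : ℝ≥0} (hv : v ≠ 0) {g : ℝ → ℝ}
    (hg : Integrable (fun x => gaussianPDFReal 0 v x * g x)) :
    Integrable g (gaussianReal 0 v) := by
  rw [gaussianReal_of_var_ne_zero _ hv]
  have hd : (gaussianPDF 0 v)
      = fun x => ((Real.toNNReal (gaussianPDFReal 0 v x) : ℝ≥0) : ℝ≥0∞) := rfl
  rw [hd, integrable_withDensity_iff_integrable_smul
    ((measurable_gaussianPDFReal 0 v).real_toNNReal)]
  refine hg.congr (Eventually.of_forall fun x => ?_)
  simp [NNReal.smul_def, Real.coe_toNNReal _ (gaussianPDFReal_nonneg 0 v x)]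

lemma gaussianReal_integrable_id {v : ℝ≥0} (hv : v ≠ 0) :
    Integrable (fun x => x) (gaussianReal 0 v) := by
  refine gaussianReal_integrable hv ?_
  have h : (fun x : ℝ => gaussianPDFReal 0 v x * x)
      = fun x => (Real.sqrt (2 * π * v))⁻¹ * (x * Real.exp (-(2 * (v:ℝ))⁻¹ * x ^ 2)) := by
    funext x; rw [pdf_eq]; ring
  rw [h]
  exact (integrable_mul_exp_neg_mul_sq (b_pos hv)).const_mul _

lemma gaussianReal_integrable_sq {v : ℝ≥0} (hv : v ≠ 0) :
    Integrable (fun x => x ^ 2) (gaussianReal 0 v) := by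
  refine gaussianReal_integrable hv ?_
  have h : (fun x : ℝ => gaussianPDFReal 0 v x * x ^ 2)
      = fun x => (Real.sqrt (2 * π * v))⁻¹ * (x ^ 2 * Real.exp (-(2 * (v:ℝ))⁻¹ * x ^ 2)) := by
    funext x; rw [pdf_eq]; ring
  rw [h]
  exact (integrable_sq_exp (b_pos hv)).const_mul _

lemma gaussianReal_integral_id {v : ℝ≥0} (hv : v ≠ 0) :
    ∫ x, x ∂(gaussianReal 0 v) = 0 := by
  rw [gaussianReal_integral_eq hv]
  have h : (fun x : ℝ => gaussianPDFReal 0 v x * x)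
      = fun x => (Real.sqrt (2 * π * v))⁻¹ * (x * Real.exp (-(2 * (v:ℝ))⁻¹ * x ^ 2)) := by
    funext x; rw [pdf_eq]; ring
  rw [h, integral_const_mul, integral_id_exp (b_pos hv), mul_zero]

lemma gaussianReal_integral_sq {v : ℝ≥0} (hv : v ≠ 0) :
    ∫ x, x ^ 2 ∂(gaussianReal 0 v) = (v : ℝ) := by
  rw [gaussianReal_integral_eq hv]
  have h : (fun x : ℝ => gaussianPDFReal 0 v x * x ^ 2)
      = fun x => (Real.sqrt (2 * π * v))⁻¹ * (x ^ 2 * Real.exp (-(2 * (v:ℝ))⁻¹ * x ^ 2)) := by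
    funext x; rw [pdf_eq]; ring
  rw [h, integral_const_mul, integral_sq_exp (b_pos hv)]
  have hv' : 0 < (v : ℝ) := coe_v_pos hv
  have h1 : π / ((2 * (v:ℝ))⁻¹) = 2 * π * v := by field_simp
  rw [h1]
  have h2 : Real.sqrt (2 * π * (v:ℝ)) ≠ 0 := by positivity
  field_simp

end KyleAux


/-- In the Kyle equilibrium the noise trader's expected profit
`E[Y·(Z − P(X(Z)+Y))]` equals `−σyσz/2`, the negative of the insider's expected
gain `E[X(Z)·(Z − P(X(Z)+Y))]`. -/
theorem kyle_noise_trader_expected_loss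
    {Ω : Type*} [MeasurableSpace Ω] (μpr : Measure Ω) [IsProbabilityMeasure μpr]
    (Z Y : Ω → ℝ) (hZm : Measurable Z) (hYm : Measurable Y)
    (μz σz σy : ℝ) (hσz : 0 < σz) (hσy : 0 < σy)
    (hZ : Measure.map Z μpr = gaussianReal μz (Real.toNNReal (σz ^ 2)))
    (hY : Measure.map Y μpr = gaussianReal 0 (Real.toNNReal (σy ^ 2)))
    (hindep : IndepFun Z Y μpr)
    (X : ℝ → ℝ) (hX : ∀ z, X z = (σy / σz) * (z - μz))
    (P : ℝ → ℝ) (hP : ∀ v, P v = μz + (σz / (2 * σy)) * v) :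
    (∫ ω, Y ω * (Z ω - P (X (Z ω) + Y ω)) ∂μpr) = -(σy * σz / 2) ∧
    (∫ ω, X (Z ω) * (Z ω - P (X (Z ω) + Y ω)) ∂μpr) = σy * σz / 2 := by
  have hσz' : σz ≠ 0 := ne_of_gt hσz
  have hσy' : σy ≠ 0 := ne_of_gt hσy
  set vz : ℝ≥0 := Real.toNNReal (σz ^ 2) with hvz
  set vy : ℝ≥0 := Real.toNNReal (σy ^ 2) with hvy
  have hvz0 : vz ≠ 0 := by
    simp only [hvz, ne_eq, Real.toNNReal_eq_zero, not_le]
    positivity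
  have hvy0 : vy ≠ 0 := by
    simp only [hvy, ne_eq, Real.toNNReal_eq_zero, not_le]
    positivity
  have hvzr : (vz : ℝ) = σz ^ 2 := Real.coe_toNNReal _ (sq_nonneg σz)
  have hvyr : (vy : ℝ) = σy ^ 2 := Real.coe_toNNReal _ (sq_nonneg σy)
  -- the centered variable W = Z - μz
  set W : Ω → ℝ := fun ω => Z ω - μz with hW
  have hWm : Measurable W := hZm.sub measurable_const
  have hWlaw : Measure.map W μpr = gaussianReal 0 vz := by
    have h1 : W = (fun x => x + (-μz)) ∘ Z := by funext ω; simp [hW, sub_eq_add_neg]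
    rw [h1, ← Measure.map_map (g := fun x : ℝ => x + -μz) (by fun_prop) hZm, hZ,
      ProbabilityTheory.gaussianReal_map_add_const (-μz), add_neg_cancel]
  -- integrability and moments of W
  have intW : Integrable W μpr := by
    have h := (KyleAux.gaussianReal_integrable_id hvz0)
    rw [← hWlaw] at h
    exact (integrable_map_measure aestronglyMeasurable_id hWm.aemeasurable).1 h
  have intW2 : Integrable (fun ω => W ω ^ 2) μpr := by
    have h := (KyleAux.gaussianReal_integrable_sq hvz0)
    rw [← hWlaw] at h
    exact (integrable_map_measure (by fun_prop) hWm.aemeasurable).1 h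
  have EW : ∫ ω, W ω ∂μpr = 0 := by
    have h := integral_map (μ := μpr) hWm.aemeasurable (f := fun x : ℝ => x) aestronglyMeasurable_id
    rw [hWlaw, KyleAux.gaussianReal_integral_id hvz0] at h
    exact h.symm
  have EW2 : ∫ ω, W ω ^ 2 ∂μpr = σz ^ 2 := by
    have h := integral_map (μ := μpr) hWm.aemeasurable (f := fun x : ℝ => x ^ 2) (by fun_prop)
    rw [hWlaw, KyleAux.gaussianReal_integral_sq hvz0, hvzr] at h
    exact h.symm
  -- integrability and moments of Y
  have intY : Integrable Y μpr := by
    have h := (KyleAux.gaussianReal_integrable_id hvy0)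
    rw [← hY] at h
    exact (integrable_map_measure aestronglyMeasurable_id hYm.aemeasurable).1 h
  have intY2 : Integrable (fun ω => Y ω ^ 2) μpr := by
    have h := (KyleAux.gaussianReal_integrable_sq hvy0)
    rw [← hY] at h
    exact (integrable_map_measure (by fun_prop) hYm.aemeasurable).1 h
  have EY : ∫ ω, Y ω ∂μpr = 0 := by
    have h := integral_map (μ := μpr) hYm.aemeasurable (f := fun x : ℝ => x) aestronglyMeasurable_id
    rw [hY, KyleAux.gaussianReal_integral_id hvy0] at h
    exact h.symm
  have EY2 : ∫ ω, Y ω ^ 2 ∂μpr = σy ^ 2 := by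
    have h := integral_map (μ := μpr) hYm.aemeasurable (f := fun x : ℝ => x ^ 2) (by fun_prop)
    rw [hY, KyleAux.gaussianReal_integral_sq hvy0, hvyr] at h
    exact h.symm
  -- independence of W and Y
  have hWY : IndepFun W Y μpr := hindep.comp (measurable_id.sub measurable_const) measurable_id
  have intWY : Integrable (fun ω => W ω * Y ω) μpr := hWY.integrable_mul intW intY
  have EWY : ∫ ω, W ω * Y ω ∂μpr = 0 := by
    have h := ProbabilityTheory.IndepFun.integral_fun_mul_eq_mul_integral hWY intW.1 intY.1
    rw [EW, zero_mul] at h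
    -- h : ∫ ω, (W * Y) ω ∂μpr = 0
    exact h
  constructor
  · have h1 : ∫ ω, Y ω * (Z ω - P (X (Z ω) + Y ω)) ∂μpr
        = ∫ ω, ((1/2) * (W ω * Y ω) - (σz / (2 * σy)) * Y ω ^ 2) ∂μpr := by
      refine integral_congr_ae (Filter.Eventually.of_forall fun ω => ?_)
      simp only [hP, hX, hW]
      field_simp
      ring
    rw [h1, integral_sub (intWY.const_mul _) (intY2.const_mul _),
      integral_const_mul, integral_const_mul, EWY, EY2]
    field_simp
    ring
  · have h2 : ∫ ω, X (Z ω) * (Z ω - P (X (Z ω) + Y ω)) ∂μpr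
        = ∫ ω, ((σy / (2 * σz)) * W ω ^ 2 - (1/2) * (W ω * Y ω)) ∂μpr := by
      refine integral_congr_ae (Filter.Eventually.of_forall fun ω => ?_)
      simp only [hP, hX, hW]
      field_simp
      ring
    rw [h2, integral_sub (intW2.const_mul _) (intWY.const_mul _),
      integral_const_mul, integral_const_mul, EWY, EW2]
    field_simp
    ring
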